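/- The coding map is open on I(f) (its inverse is continuous): for every x ∈ J with f^[m](x) ∉ {0, 1} for all m ≥ 0 and for every δ > 0, there exists N ≥ 0 such that every y ∈ J with f^[m](y) ∉ {0, 1} for all m ≥ 0 which has the same itinerary as x up to time N (i.e. for each 0 ≤ j ≤ N there is γ ∈ 𝒜 containing both f^[j](x) and f^[j](y)) satisfies |y − x|₂ ≤ δ. In particular, if two points of J have identical itineraries through 𝒜 for all times, they are equal. -/
import Mathlib


open Function Set

/-- The cubic polynomial `f(x) = (9/4)·x·(x−1)²` acting on `ℚ₂`. -/
noncomputable def f : ℚ_[2] → ℚ_[2] := fun x => (9 / 4 : ℚ_[2]) * x * (x - 1) ^ 2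

/-- `J = {x ∈ ℚ₂ : fⁿ(x) ∈ 4ℤ₂ ∪ (1+4ℤ₂) for all n ≥ 0}`, which the paper proves
to be the Julia set of `f` in `ℚ₂`. -/
def J : Set ℚ_[2] :=
  {x | ∀ n : ℕ, f^[n] x ∈
    {y : ℚ_[2] | ‖y‖ ≤ (1 / 2 : ℝ) ^ 2} ∪ {y : ℚ_[2] | ‖y - 1‖ ≤ (1 / 2 : ℝ) ^ 2}}

/-- The disk `A_n = 2^{2n} + 2^{2n+3}ℤ₂`. -/
def A (n : ℕ) : Set ℚ_[2] :=
  {x | ‖x - 2 ^ (2 * n)‖ ≤ (1 / 2 : ℝ) ^ (2 * n + 3)}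

/-- The disk `A'_n = 2^{2n} + 2^{2n+2} + 2^{2n+3}ℤ₂`. -/
def A' (n : ℕ) : Set ℚ_[2] :=
  {x | ‖x - (2 ^ (2 * n) + 2 ^ (2 * n + 2))‖ ≤ (1 / 2 : ℝ) ^ (2 * n + 3)}

/-- The disk `B_n = 1 + 2^{n+1} + 2^{n+3}ℤ₂`. -/
def B (n : ℕ) : Set ℚ_[2] :=
  {x | ‖x - (1 + 2 ^ (n + 1))‖ ≤ (1 / 2 : ℝ) ^ (n + 3)}

/-- The disk `B'_n = 1 + 2^{n+1} + 2^{n+2} + 2^{n+3}ℤ₂`. -/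
def B' (n : ℕ) : Set ℚ_[2] :=
  {x | ‖x - (1 + 2 ^ (n + 1) + 2 ^ (n + 2))‖ ≤ (1 / 2 : ℝ) ^ (n + 3)}

/-- The alphabet `𝒜`: the collection consisting of `{0}`, `{1}`, and
`A_n ∩ J`, `A'_n ∩ J`, `B_n ∩ J`, `B'_n ∩ J` for all `n ≥ 1`. -/
def alphabet : Set (Set ℚ_[2]) :=
  {s | s = {0} ∨ s = {1} ∨
    ∃ n : ℕ, 1 ≤ n ∧ (s = A n ∩ J ∨ s = A' n ∩ J ∨ s = B n ∩ J ∨ s = B' n ∩ J)}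

-- basic pow-half helpers
lemma phle {m n : ℕ} (h : m ≤ n) : (1/2:ℝ)^n ≤ (1/2)^m :=
  pow_le_pow_of_le_one (by norm_num) (by norm_num) h

lemma phlt {m n : ℕ} (h : m < n) : (1/2:ℝ)^n < (1/2)^m :=
  pow_lt_pow_right_of_lt_one₀ (by norm_num) (by norm_num) h

lemma phpos (n : ℕ) : (0:ℝ) < (1/2)^n := by positivity

-- ultrametric helpers
lemma addlt {q r : ℚ_[2]} (h : ‖q‖ < ‖r‖) : ‖q + r‖ = ‖r‖ := by
  rw [Padic.add_eq_max_of_ne (ne_of_lt h), max_eq_right h.le]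

lemma submax (q r : ℚ_[2]) : ‖q - r‖ ≤ max ‖q‖ ‖r‖ := by
  rw [sub_eq_add_neg]
  simpa using Padic.nonarchimedean q (-r)

lemma ntwo : ‖(2:ℚ_[2])‖ = 1/2 := by
  have := @Padic.norm_p 2 _
  norm_num at this ⊢
  exact this

lemma npow (k : ℕ) : ‖(2:ℚ_[2])^k‖ = (1/2:ℝ)^k := by rw [norm_pow, ntwo]

lemma n94 : ‖(9/4 : ℚ_[2])‖ = 4 := by
  have h9 : ‖(9:ℚ_[2])‖ = 1 := by
    have : (9:ℚ_[2]) = 2^3 + 1 := by norm_num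
    rw [this, addlt (by rw [npow, norm_one]; norm_num), norm_one]
  have h4 : ‖(4:ℚ_[2])‖ = 1/4 := by
    have : (4:ℚ_[2]) = 2^2 := by norm_num
    rw [this, npow]; norm_num
  rw [norm_div, h9, h4]; norm_num
lemma fdiffA (a b : ℚ_[2]) :
    f a - f b = (9/4) * ((a - b) * (1 + (a^2 + a*b + b^2 - 2*a - 2*b))) := by
  show (9 / 4 : ℚ_[2]) * a * (a - 1) ^ 2 - (9 / 4 : ℚ_[2]) * b * (b - 1) ^ 2 = _
  ring

lemma fdiffB (a b : ℚ_[2]) :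
    f a - f b = (9/4) * ((a - b) *
      (((a-1)^2 + (a-1)*(b-1) + (b-1)^2) + ((a-1) + (b-1)))) := by
  show (9 / 4 : ℚ_[2]) * a * (a - 1) ^ 2 - (9 / 4 : ℚ_[2]) * b * (b - 1) ^ 2 = _
  ring

lemma stepA {a b : ℚ_[2]} (ha : ‖a‖ ≤ 1/4) (hb : ‖b‖ ≤ 1/4) :
    ‖f a - f b‖ = 4 * ‖a - b‖ := by
  have hmul : ∀ u v : ℚ_[2], ‖u‖ ≤ 1/4 → ‖v‖ ≤ 1/4 → ‖u * v‖ ≤ 1/16 := by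
    intro u v hu hv
    rw [norm_mul]
    calc ‖u‖ * ‖v‖ ≤ (1/4) * (1/4) :=
          mul_le_mul hu hv (norm_nonneg _) (by norm_num)
      _ = 1/16 := by norm_num
  have h2 : ∀ u : ℚ_[2], ‖u‖ ≤ 1/4 → ‖2 * u‖ ≤ 1/8 := by
    intro u hu
    rw [norm_mul, ntwo]
    nlinarith [norm_nonneg u]
  have hq : ‖a^2 + a*b + b^2‖ ≤ 1/16 := by
    refine le_trans (Padic.nonarchimedean _ _) (max_le (le_trans (Padic.nonarchimedean _ _) (max_le ?_ ?_)) ?_)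
    · rw [sq]; exact hmul a a ha ha
    · exact hmul a b ha hb
    · rw [sq]; exact hmul b b hb hb
  have hl : ‖2*a + 2*b‖ ≤ 1/8 :=
    le_trans (Padic.nonarchimedean _ _) (max_le (h2 a ha) (h2 b hb))
  have ht : ‖a^2 + a*b + b^2 - 2*a - 2*b‖ < 1 := by
    have : a^2 + a*b + b^2 - 2*a - 2*b = (a^2 + a*b + b^2) - (2*a + 2*b) := by ring
    rw [this]
    calc ‖(a^2 + a*b + b^2) - (2*a + 2*b)‖ ≤ max ‖a^2 + a*b + b^2‖ ‖2*a + 2*b‖ := submax _ _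
      _ ≤ 1/8 := max_le (le_trans hq (by norm_num)) hl
      _ < 1 := by norm_num
  have hone : ‖(1:ℚ_[2]) + (a^2 + a*b + b^2 - 2*a - 2*b)‖ = 1 := by
    rw [add_comm, addlt (by rw [norm_one]; exact ht), norm_one]
  rw [fdiffA, norm_mul, norm_mul, n94, hone, mul_one]

lemma stepB {a b c : ℚ_[2]} {n : ℕ} (hn : 1 ≤ n)
    (hc : ‖c‖ = (1/2:ℝ)^(n+1)) (hcc : ‖c + c‖ = (1/2:ℝ)^(n+2))
    (ha : ‖a - (1+c)‖ ≤ (1/2:ℝ)^(n+3)) (hb : ‖b - (1+c)‖ ≤ (1/2:ℝ)^(n+3)) :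
    ‖f a - f b‖ = (1/2:ℝ)^n * ‖a - b‖ ∧ ‖a - b‖ ≤ (1/2:ℝ)^(n+3) ∧
      ‖a‖ = 1 ∧ ‖a - 1‖ = (1/2:ℝ)^(n+1) := by
  have hac : ‖(a - 1) - c‖ ≤ (1/2:ℝ)^(n+3) := by
    have : (a - 1) - c = a - (1+c) := by ring
    rwa [this]
  have hbc : ‖(b - 1) - c‖ ≤ (1/2:ℝ)^(n+3) := by
    have : (b - 1) - c = b - (1+c) := by ring
    rwa [this]
  have hu : ‖a - 1‖ = (1/2:ℝ)^(n+1) := by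
    have : a - 1 = ((a-1) - c) + c := by ring
    rw [this, addlt (by rw [hc]; exact lt_of_le_of_lt hac (phlt (by omega))), hc]
  have hv : ‖b - 1‖ = (1/2:ℝ)^(n+1) := by
    have : b - 1 = ((b-1) - c) + c := by ring
    rw [this, addlt (by rw [hc]; exact lt_of_le_of_lt hbc (phlt (by omega))), hc]
  have hanorm : ‖a‖ = 1 := by
    have : a = (a - 1) + 1 := by ring
    rw [this, addlt (by rw [norm_one, hu]; exact pow_lt_one₀ (by norm_num) (by norm_num) (by omega)), norm_one]
  have hsum : ‖(a-1) + (b-1)‖ = (1/2:ℝ)^(n+2) := by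
    have he : (a-1) + (b-1) = (((a-1) - c) + ((b-1) - c)) + (c + c) := by ring
    rw [he, addlt, hcc]
    rw [hcc]
    calc ‖((a-1) - c) + ((b-1) - c)‖ ≤ max _ _ := Padic.nonarchimedean _ _
      _ ≤ (1/2:ℝ)^(n+3) := max_le hac hbc
      _ < (1/2:ℝ)^(n+2) := phlt (by omega)
  have hquad : ‖(a-1)^2 + (a-1)*(b-1) + (b-1)^2‖ < (1/2:ℝ)^(n+2) := by
    have hbound : ∀ u v : ℚ_[2], ‖u‖ = (1/2:ℝ)^(n+1) → ‖v‖ = (1/2:ℝ)^(n+1) →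
        ‖u * v‖ ≤ (1/2:ℝ)^(2*n+2) := by
      intro u v h1 h2
      rw [norm_mul, h1, h2, ← pow_add]
      exact phle (by omega)
    have h1 := hbound _ _ hu hu
    have h2 := hbound _ _ hu hv
    have h3 := hbound _ _ hv hv
    rw [← sq] at h1 h3
    calc ‖(a-1)^2 + (a-1)*(b-1) + (b-1)^2‖
        ≤ max ‖(a-1)^2 + (a-1)*(b-1)‖ ‖(b-1)^2‖ := Padic.nonarchimedean _ _
      _ ≤ (1/2:ℝ)^(2*n+2) :=
          max_le (le_trans (Padic.nonarchimedean _ _) (max_le h1 h2)) h3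
      _ < (1/2:ℝ)^(n+2) := phlt (by omega)
  have hbr : ‖(((a-1)^2 + (a-1)*(b-1) + (b-1)^2) + ((a-1) + (b-1)))‖ = (1/2:ℝ)^(n+2) := by
    rw [addlt (by rw [hsum]; exact hquad), hsum]
  have hmain : ‖f a - f b‖ = (1/2:ℝ)^n * ‖a - b‖ := by
    rw [fdiffB, norm_mul, norm_mul, n94, hbr]
    rw [show (1/2:ℝ)^(n+2) = (1/2)^n * (1/4) by rw [pow_add]; norm_num]
    ring
  have hab : ‖a - b‖ ≤ (1/2:ℝ)^(n+3) := by
    have : a - b = (a - (1+c)) - (b - (1+c)) := by ring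
    rw [this]
    exact le_trans (submax _ _) (max_le ha hb)
  exact ⟨hmain, hab, hanorm, hu⟩
lemma classify {γ : Set ℚ_[2]} (hγ : γ ∈ alphabet) {a b : ℚ_[2]}
    (haγ : a ∈ γ) (hbγ : b ∈ γ) (ha0 : a ≠ 0) (ha1 : a ≠ 1) :
    (‖a - b‖ ≤ (1/2:ℝ)^5 ∧ ‖f a - f b‖ = 4 * ‖a - b‖ ∧ ‖a‖ ≤ 1/4) ∨
    (∃ n : ℕ, 1 ≤ n ∧ ‖a - b‖ ≤ (1/2:ℝ)^(n+3) ∧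
      ‖f a - f b‖ = (1/2:ℝ)^n * ‖a - b‖ ∧ ‖a‖ = 1 ∧ ‖a - 1‖ = (1/2:ℝ)^(n+1)) := by
  have hA : ∀ (n : ℕ) (c : ℚ_[2]), 1 ≤ n → ‖c‖ ≤ (1/2:ℝ)^(2*n) →
      ‖a - c‖ ≤ (1/2:ℝ)^(2*n+3) → ‖b - c‖ ≤ (1/2:ℝ)^(2*n+3) →
      (‖a - b‖ ≤ (1/2:ℝ)^5 ∧ ‖f a - f b‖ = 4 * ‖a - b‖ ∧ ‖a‖ ≤ 1/4) := by
    intro n c hn hc hac hbc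
    have hnorm : ∀ z : ℚ_[2], ‖z - c‖ ≤ (1/2:ℝ)^(2*n+3) → ‖z‖ ≤ 1/4 := by
      intro z hz
      have he : z = (z - c) + c := by ring
      rw [he]
      calc ‖(z - c) + c‖ ≤ max ‖z - c‖ ‖c‖ := Padic.nonarchimedean _ _
        _ ≤ (1/2:ℝ)^(2*n) := max_le (le_trans hz (phle (by omega))) hc
        _ ≤ (1/2:ℝ)^2 := phle (by omega)
        _ = 1/4 := by norm_num
    have hab : ‖a - b‖ ≤ (1/2:ℝ)^5 := by
      have he : a - b = (a - c) - (b - c) := by ring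
      rw [he]
      exact le_trans (submax _ _) (max_le (le_trans hac (phle (by omega)))
        (le_trans hbc (phle (by omega))))
    exact ⟨hab, stepA (hnorm a hac) (hnorm b hbc), hnorm a hac⟩
  have hB : ∀ (n : ℕ) (c : ℚ_[2]), 1 ≤ n → ‖c‖ = (1/2:ℝ)^(n+1) →
      ‖c + c‖ = (1/2:ℝ)^(n+2) →
      ‖a - (1+c)‖ ≤ (1/2:ℝ)^(n+3) → ‖b - (1+c)‖ ≤ (1/2:ℝ)^(n+3) →
      (∃ n : ℕ, 1 ≤ n ∧ ‖a - b‖ ≤ (1/2:ℝ)^(n+3) ∧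
        ‖f a - f b‖ = (1/2:ℝ)^n * ‖a - b‖ ∧ ‖a‖ = 1 ∧ ‖a - 1‖ = (1/2:ℝ)^(n+1)) := by
    intro n c hn hc hcc hac hbc
    obtain ⟨h1, h2, h3, h4⟩ := stepB hn hc hcc hac hbc
    exact ⟨n, hn, h2, h1, h3, h4⟩
  rcases hγ with h | h | ⟨n, hn, h | h | h | h⟩
  · exact absurd (by simpa using (h ▸ haγ : a ∈ ({0}:Set ℚ_[2]))) ha0
  · exact absurd (by simpa using (h ▸ haγ : a ∈ ({1}:Set ℚ_[2]))) ha1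
  · subst h
    exact Or.inl (hA n (2^(2*n)) hn (le_of_eq (npow _)) haγ.1 hbγ.1)
  · subst h
    refine Or.inl (hA n (2^(2*n) + 2^(2*n+2)) hn ?_ haγ.1 hbγ.1)
    calc ‖(2:ℚ_[2])^(2*n) + 2^(2*n+2)‖ ≤ max _ _ := Padic.nonarchimedean _ _
      _ ≤ (1/2:ℝ)^(2*n) := by
          rw [npow, npow]
          exact max_le le_rfl (phle (by omega))
  · subst h
    refine Or.inr (hB n (2^(n+1)) hn (npow _) ?_ ?_ ?_)
    · rw [show ((2:ℚ_[2])^(n+1) + 2^(n+1)) = 2^(n+2) by rw [pow_succ]; ring, npow]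
    · have := haγ.1
      rwa [show ((1:ℚ_[2]) + 2^(n+1)) = 1 + 2^(n+1) by ring]
    · exact hbγ.1
  · subst h
    refine Or.inr (hB n (2^(n+1) + 2^(n+2)) hn ?_ ?_ ?_ ?_)
    · rw [show ((2:ℚ_[2])^(n+1) + 2^(n+2)) = 2^(n+2) + 2^(n+1) by ring,
        addlt (by rw [npow, npow]; exact phlt (by omega)), npow]
    · rw [show ((2:ℚ_[2])^(n+1) + 2^(n+2)) + (2^(n+1) + 2^(n+2)) = 2^(n+3) + 2^(n+2) by
        rw [pow_succ, pow_succ, pow_succ]; ring,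
        addlt (by rw [npow, npow]; exact phlt (by omega)), npow]
    · have := haγ.1
      rwa [show ((1:ℚ_[2]) + (2^(n+1) + 2^(n+2))) = 1 + 2^(n+1) + 2^(n+2) by ring]
    · have := hbγ.1
      rwa [show ((1:ℚ_[2]) + (2^(n+1) + 2^(n+2))) = 1 + 2^(n+1) + 2^(n+2) by ring]

lemma fnorm (a : ℚ_[2]) : ‖f a‖ = 4 * (‖a‖ * ‖a - 1‖^2) := by
  show ‖(9 / 4 : ℚ_[2]) * a * (a - 1) ^ 2‖ = _
  rw [norm_mul, norm_mul, norm_pow, n94]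
  ring

lemma block {a : ℚ_[2]} {n : ℕ} (hn : 1 ≤ n) (h1 : ‖a‖ = 1)
    (h2 : ‖a - 1‖ = (1/2:ℝ)^(n+1)) :
    ∀ i, 1 ≤ i → i ≤ n → ‖f^[i] a‖ = (1/2:ℝ)^(2*(n+1-i)) := by
  intro i
  induction i with
  | zero => omega
  | succ i ih =>
    intro _ hin
    rcases Nat.eq_zero_or_pos i with rfl | hi
    · rw [Function.iterate_one, fnorm, h1, h2, ← pow_mul]
      rw [show 2*(n+1-1) = 2*n by omega, show (n+1)*2 = 2*n + 2 by ring, pow_add]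
      ring
    · have hprev := ih hi (by omega)
      rw [Function.iterate_succ_apply', fnorm]
      have hlt : ‖f^[i] a‖ < 1 := by
        rw [hprev]
        exact pow_lt_one₀ (by norm_num) (by norm_num) (by omega)
      have hm1 : ‖f^[i] a - 1‖ = 1 := by
        rw [sub_eq_add_neg, addlt (by rwa [norm_neg, norm_one]), norm_neg, norm_one]
      rw [hm1, hprev, one_pow, mul_one]
      rw [show 2*(n+1-i) = (2*(n+1-(i+1))) + 2 by omega, pow_add]
      ring
lemma key (x y : ℚ_[2]) (hx : ∀ m, f^[m] x ≠ 0 ∧ f^[m] x ≠ 1) (N : ℕ)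
    (hit : ∀ j, j ≤ N → ∃ γ ∈ alphabet, f^[j] x ∈ γ ∧ f^[j] y ∈ γ) :
    ∀ k j, j ≤ N → N - j = k → ‖f^[j] x - f^[j] y‖ ^ 2 ≤ (1/2:ℝ) ^ (6 + k) := by
  intro k
  induction k using Nat.strong_induction_on with
  | _ k ih =>
    intro j hj hk
    obtain ⟨γ, hγ, hxγ, hyγ⟩ := hit j hj
    rcases classify hγ hxγ hyγ (hx j).1 (hx j).2 with
      ⟨hcap, hstep, -⟩ | ⟨n, hn, hcap, hstep, ha1, hanorm⟩
    · -- case A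
      rcases Nat.eq_zero_or_pos k with rfl | hkpos
      · calc ‖f^[j] x - f^[j] y‖^2 ≤ ((1/2:ℝ)^5)^2 :=
            pow_le_pow_left₀ (norm_nonneg _) hcap 2
          _ ≤ (1/2:ℝ)^(6+0) := by norm_num
      · have ihj := ih (k-1) (by omega) (j+1) (by omega) (by omega)
        rw [Function.iterate_succ_apply', Function.iterate_succ_apply', hstep] at ihj
        have hE : (0:ℝ) ≤ (1/2:ℝ)^(6+(k-1)) := by positivity
        have hgoal : (1/2:ℝ)^(6+(k-1)) = (1/2:ℝ)^(6+k) * 2 := by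
          rw [show 6+k = (6+(k-1))+1 by omega, pow_succ]; ring
        nlinarith [sq_nonneg ‖f^[j] x - f^[j] y‖]
    · -- case B
      by_cases hk2 : k ≤ 2*n
      · calc ‖f^[j] x - f^[j] y‖^2 ≤ ((1/2:ℝ)^(n+3))^2 :=
            pow_le_pow_left₀ (norm_nonneg _) hcap 2
          _ = (1/2:ℝ)^(2*n+6) := by rw [← pow_mul]; congr 1; ring
          _ ≤ (1/2:ℝ)^(6+k) := phle (by omega)
      · -- k ≥ 2n+1, so the full block fits before N
        have hjn : j + n + 1 ≤ N := by omega
        have hnx : ∀ i, 1 ≤ i → i ≤ n → ‖f^[j+i] x‖ = (1/2:ℝ)^(2*(n+1-i)) := by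
          intro i hi1 hi2
          have hb := block hn ha1 hanorm i hi1 hi2
          rwa [← Function.iterate_add_apply, Nat.add_comm i j] at hb
        have hchain : ∀ i, i ≤ n →
            ‖f^[j+1+i] x - f^[j+1+i] y‖ = 4^i * ‖f^[j+1] x - f^[j+1] y‖ := by
          intro i
          induction i with
          | zero => intro _; simp
          | succ i ihc =>
            intro hin
            obtain ⟨γ', hγ', hxγ', hyγ'⟩ := hit (j+1+i) (by omega)
            have hnrm : ‖f^[j+1+i] x‖ = (1/2:ℝ)^(2*(n-i)) := by
              have := hnx (i+1) (by omega) (by omega)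
              rw [show j+(i+1) = j+1+i by omega] at this
              rwa [show 2*(n+1-(i+1)) = 2*(n-i) by omega] at this
            rcases classify hγ' hxγ' hyγ' (hx _).1 (hx _).2 with
              ⟨-, hstep', -⟩ | ⟨m, -, -, -, hone, -⟩
            · rw [show j+1+(i+1) = (j+1+i)+1 by omega,
                Function.iterate_succ_apply', Function.iterate_succ_apply',
                hstep', ihc (by omega), pow_succ]
              ring
            · exfalso
              rw [hnrm] at hone
              have : (1/2:ℝ)^(2*(n-i)) < 1 :=
                pow_lt_one₀ (by norm_num) (by norm_num) (by omega)
              linarith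
        have hch := hchain n le_rfl
        have hstep1 : ‖f^[j+1] x - f^[j+1] y‖ = (1/2:ℝ)^n * ‖f^[j] x - f^[j] y‖ := by
          rw [Function.iterate_succ_apply', Function.iterate_succ_apply', hstep]
        have ihj := ih (k-(n+1)) (by omega) (j+n+1) hjn (by omega)
        rw [show j+n+1 = j+1+n by omega, hch, hstep1] at ihj
        -- ihj : (4^n * ((1/2)^n * d))^2 ≤ (1/2)^(6+(k-(n+1)))
        set d := ‖f^[j] x - f^[j] y‖ with hd
        have h4 : (4:ℝ)^n * (1/2)^n = 2^n := by
          rw [← mul_pow]; norm_num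
        have ihj' : ((2:ℝ)^n)^2 * d^2 ≤ (1/2:ℝ)^(6+(k-(n+1))) := by
          calc ((2:ℝ)^n)^2 * d^2 = ((4:ℝ)^n * ((1/2)^n * d))^2 := by
                rw [← h4]; ring
            _ ≤ _ := ihj
        have hEsplit : (1/2:ℝ)^(6+k) * 2^(n+1) = (1/2:ℝ)^(6+(k-(n+1))) := by
          rw [show 6+k = (6+(k-(n+1))) + (n+1) by omega]
          rw [pow_add ((1:ℝ)/2) (6+(k-(n+1))) (n+1), mul_assoc, ← mul_pow]
          norm_num
        have h2le : (2:ℝ)^(n+1) ≤ ((2:ℝ)^n)^2 := by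
          rw [← pow_mul]
          exact pow_le_pow_right₀ (by norm_num) (by omega)
        have hpos : (0:ℝ) < ((2:ℝ)^n)^2 := by positivity
        have hG : (0:ℝ) ≤ (1/2:ℝ)^(6+k) := by positivity
        -- (2^n)^2 d^2 ≤ G * 2^{n+1} ≤ G * (2^n)^2, hence d^2 ≤ G
        have : ((2:ℝ)^n)^2 * d^2 ≤ (1/2:ℝ)^(6+k) * ((2:ℝ)^n)^2 := by
          calc ((2:ℝ)^n)^2 * d^2 ≤ (1/2:ℝ)^(6+k) * 2^(n+1) := by rw [hEsplit]; exact ihj'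
            _ ≤ (1/2:ℝ)^(6+k) * ((2:ℝ)^n)^2 := by
                exact mul_le_mul_of_nonneg_left h2le hG
        nlinarith
lemma small_pow_lt_one (n : ℕ) : ((1:ℝ)/2)^(n+1) < 1 :=
  pow_lt_one₀ (by norm_num) (by norm_num) (by omega)

lemma letter_zero {γ : Set ℚ_[2]} (hγ : γ ∈ alphabet) (h0 : (0:ℚ_[2]) ∈ γ) : γ = {0} := by
  rcases hγ with h | h | ⟨n, hn, h | h | h | h⟩
  · exact h
  · exfalso; rw [h] at h0; simp at h0
  · exfalso
    have hle : ‖(0:ℚ_[2]) - 2^(2*n)‖ ≤ (1/2:ℝ)^(2*n+3) := (h ▸ h0 : (0:ℚ_[2]) ∈ A n ∩ J).1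
    rw [zero_sub, norm_neg, npow] at hle
    exact absurd hle (not_le.mpr (phlt (by omega)))
  · exfalso
    have hle : ‖(0:ℚ_[2]) - (2^(2*n) + 2^(2*n+2))‖ ≤ (1/2:ℝ)^(2*n+3) :=
      (h ▸ h0 : (0:ℚ_[2]) ∈ A' n ∩ J).1
    rw [zero_sub, norm_neg, show ((2:ℚ_[2])^(2*n) + 2^(2*n+2)) = 2^(2*n+2) + 2^(2*n) by ring,
      addlt (by rw [npow, npow]; exact phlt (by omega)), npow] at hle
    exact absurd hle (not_le.mpr (phlt (by omega)))
  · exfalso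
    have hle : ‖(0:ℚ_[2]) - (1 + 2^(n+1))‖ ≤ (1/2:ℝ)^(n+3) := (h ▸ h0 : (0:ℚ_[2]) ∈ B n ∩ J).1
    rw [zero_sub, norm_neg, show ((1:ℚ_[2]) + 2^(n+1)) = 2^(n+1) + 1 by ring,
      addlt (by rw [npow, norm_one]; exact small_pow_lt_one n), norm_one] at hle
    have := small_pow_lt_one (n+2)
    linarith [phle (show n+1 ≤ n+3 by omega), hle]
  · exfalso
    have hle : ‖(0:ℚ_[2]) - (1 + 2^(n+1) + 2^(n+2))‖ ≤ (1/2:ℝ)^(n+3) :=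
      (h ▸ h0 : (0:ℚ_[2]) ∈ B' n ∩ J).1
    have hin : ‖(2:ℚ_[2])^(n+1) + 2^(n+2)‖ = (1/2:ℝ)^(n+1) := by
      rw [show ((2:ℚ_[2])^(n+1) + 2^(n+2)) = 2^(n+2) + 2^(n+1) by ring,
        addlt (by rw [npow, npow]; exact phlt (by omega)), npow]
    rw [zero_sub, norm_neg,
      show ((1:ℚ_[2]) + 2^(n+1) + 2^(n+2)) = (2^(n+1) + 2^(n+2)) + 1 by ring,
      addlt (by rw [hin, norm_one]; exact small_pow_lt_one n), norm_one] at hle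
    have h1 : ((1:ℝ)/2)^(n+3) < 1 := small_pow_lt_one (n+2)
    linarith
  
lemma letter_one {γ : Set ℚ_[2]} (hγ : γ ∈ alphabet) (h1 : (1:ℚ_[2]) ∈ γ) : γ = {1} := by
  rcases hγ with h | h | ⟨n, hn, h | h | h | h⟩
  · exfalso; rw [h] at h1; simp at h1
  · exact h
  · exfalso
    have hle : ‖(1:ℚ_[2]) - 2^(2*n)‖ ≤ (1/2:ℝ)^(2*n+3) := (h ▸ h1 : (1:ℚ_[2]) ∈ A n ∩ J).1
    rw [show ((1:ℚ_[2]) - 2^(2*n)) = -(2^(2*n)) + 1 by ring,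
      addlt (by rw [norm_neg, npow, norm_one]; exact pow_lt_one₀ (by norm_num) (by norm_num) (by omega)), norm_one] at hle
    have := small_pow_lt_one (2*n+2)
    linarith
  · exfalso
    have hle : ‖(1:ℚ_[2]) - (2^(2*n) + 2^(2*n+2))‖ ≤ (1/2:ℝ)^(2*n+3) :=
      (h ▸ h1 : (1:ℚ_[2]) ∈ A' n ∩ J).1
    have hin : ‖-((2:ℚ_[2])^(2*n) + 2^(2*n+2))‖ = (1/2:ℝ)^(2*n) := by
      rw [norm_neg, show ((2:ℚ_[2])^(2*n) + 2^(2*n+2)) = 2^(2*n+2) + 2^(2*n) by ring,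
        addlt (by rw [npow, npow]; exact phlt (by omega)), npow]
    rw [show ((1:ℚ_[2]) - (2^(2*n) + 2^(2*n+2))) = -(2^(2*n) + 2^(2*n+2)) + 1 by ring,
      addlt (by rw [hin, norm_one]; exact pow_lt_one₀ (by norm_num) (by norm_num) (by omega)),
      norm_one] at hle
    have := small_pow_lt_one (2*n+2)
    linarith
  · exfalso
    have hle : ‖(1:ℚ_[2]) - (1 + 2^(n+1))‖ ≤ (1/2:ℝ)^(n+3) := (h ▸ h1 : (1:ℚ_[2]) ∈ B n ∩ J).1
    rw [show ((1:ℚ_[2]) - (1 + 2^(n+1))) = -(2^(n+1)) by ring, norm_neg, npow] at hle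
    exact absurd hle (not_le.mpr (phlt (by omega)))
  · exfalso
    have hle : ‖(1:ℚ_[2]) - (1 + 2^(n+1) + 2^(n+2))‖ ≤ (1/2:ℝ)^(n+3) :=
      (h ▸ h1 : (1:ℚ_[2]) ∈ B' n ∩ J).1
    rw [show ((1:ℚ_[2]) - (1 + 2^(n+1) + 2^(n+2))) = -(2^(n+1) + 2^(n+2)) by ring, norm_neg,
      show ((2:ℚ_[2])^(n+1) + 2^(n+2)) = 2^(n+2) + 2^(n+1) by ring,
      addlt (by rw [npow, npow]; exact phlt (by omega)), npow] at hle
    exact absurd hle (not_le.mpr (phlt (by omega)))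
/-- Openness of the coding map on `I(f)` (continuity of its inverse): for every `x ∈ J`
whose orbit avoids `{0, 1}` and every `δ > 0`, there is `N` such that every `y ∈ J` whose
orbit avoids `{0, 1}` and which has the same itinerary through `𝒜` as `x` up to time `N`
satisfies `|y − x|₂ ≤ δ`. In particular, two points of `J` with identical itineraries for
all times are equal. -/
theorem stmt19 :
    (∀ x ∈ J, (∀ m : ℕ, f^[m] x ≠ 0 ∧ f^[m] x ≠ 1) → ∀ δ : ℝ, 0 < δ →
      ∃ N : ℕ, ∀ y ∈ J, (∀ m : ℕ, f^[m] y ≠ 0 ∧ f^[m] y ≠ 1) →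
        (∀ j : ℕ, j ≤ N → ∃ γ ∈ alphabet, f^[j] x ∈ γ ∧ f^[j] y ∈ γ) →
        ‖y - x‖ ≤ δ) ∧
    (∀ x ∈ J, ∀ y ∈ J,
      (∀ j : ℕ, ∃ γ ∈ alphabet, f^[j] x ∈ γ ∧ f^[j] y ∈ γ) → x = y) := by
  constructor
  · -- openness of the coding map
    intro x _ hx δ hδ
    obtain ⟨N, hN⟩ : ∃ N : ℕ, (1/2:ℝ)^(6+N) ≤ δ^2 := by
      obtain ⟨N, hN⟩ := exists_pow_lt_of_lt_one (show (0:ℝ) < δ^2 by positivity)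
        (show (1:ℝ)/2 < 1 by norm_num)
      exact ⟨N, le_trans (phle (by omega)) hN.le⟩
    refine ⟨N, fun y _ _ hsame => ?_⟩
    have hk := key x y hx N hsame N 0 (Nat.zero_le N) (by omega)
    simp only [Function.iterate_zero_apply] at hk
    have h2 : ‖y - x‖^2 ≤ δ^2 := by
      rw [norm_sub_rev]
      exact le_trans hk hN
    nlinarith [norm_nonneg (y - x)]
  · -- injectivity of the coding map
    intro x _ y _ hsame
    classical
    by_cases hhit : ∃ m, f^[m] x = 0 ∨ f^[m] x = 1
    · set m := Nat.find hhit with hmdef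
      have hm := Nat.find_spec hhit
      have hmin : ∀ j < m, f^[j] x ≠ 0 ∧ f^[j] x ≠ 1 := by
        intro j hj
        have := Nat.find_min hhit hj
        push_neg at this
        exact this
      have hbase : f^[m] x = f^[m] y := by
        obtain ⟨γ, hγ, hxγ, hyγ⟩ := hsame m
        rcases hm with h0 | h1
        · have hγ0 : γ = {0} := letter_zero hγ (h0 ▸ hxγ)
          rw [h0]
          have : f^[m] y ∈ ({0} : Set ℚ_[2]) := hγ0 ▸ hyγ
          simpa using this.symm
        · have hγ1 : γ = {1} := letter_one hγ (h1 ▸ hxγ)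
          rw [h1]
          have : f^[m] y ∈ ({1} : Set ℚ_[2]) := hγ1 ▸ hyγ
          simpa using this.symm
      have hdown : ∀ i, i ≤ m → f^[m - i] x = f^[m - i] y := by
        intro i
        induction i with
        | zero => intro _; simpa using hbase
        | succ i ihd =>
          intro him
          have hj : m - (i+1) < m := by omega
          set j := m - (i+1) with hjdef
          have hprev : f^[j+1] x = f^[j+1] y := by
            rw [show j + 1 = m - i by omega]
            exact ihd (by omega)
          obtain ⟨γ, hγ, hxγ, hyγ⟩ := hsame j
          have hne := hmin j hj
          have hzero : ‖f (f^[j] x) - f (f^[j] y)‖ = 0 := by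
            rw [← Function.iterate_succ_apply' f j x, ← Function.iterate_succ_apply' f j y, hprev,
              sub_self, norm_zero]
          rcases classify hγ hxγ hyγ hne.1 hne.2 with
            ⟨-, hstep, -⟩ | ⟨n, -, -, hstep, -, -⟩
          · rw [hstep] at hzero
            have : ‖f^[j] x - f^[j] y‖ = 0 := by linarith [norm_nonneg (f^[j] x - f^[j] y)]
            exact sub_eq_zero.mp (norm_eq_zero.mp this)
          · rw [hstep] at hzero
            have hp : (0:ℝ) < (1/2)^n := phpos n
            have : ‖f^[j] x - f^[j] y‖ = 0 := by
              rcases mul_eq_zero.mp hzero with h | h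
              · exact absurd h (ne_of_gt hp)
              · exact h
            exact sub_eq_zero.mp (norm_eq_zero.mp this)
      simpa using hdown m le_rfl
    · push_neg at hhit
      by_contra hxy
      have hd : (0:ℝ) < ‖x - y‖^2 := by
        have : x - y ≠ 0 := sub_ne_zero.mpr hxy
        exact pow_pos (norm_pos_iff.mpr this) 2
      obtain ⟨N, hN⟩ := exists_pow_lt_of_lt_one hd (show (1:ℝ)/2 < 1 by norm_num)
      have hk := key x y hhit N (fun j _ => hsame j) N 0 (Nat.zero_le N) (by omega)
      simp only [Function.iterate_zero_apply] at hk
      have : (1/2:ℝ)^(6+N) ≤ (1/2:ℝ)^N := phle (by omega)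
      linarith
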